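/- Let v, t and a be integers with v ≥ t ≥ 3 and 0 < a < t. Then SCAN(t, v) ≥ a! · CAN_X(t − a, v − a, a + 1), where SCAN(t, v) is the minimum N such that an SCA(N; t, v) exists and CAN_X(t', k, w) is the minimum N such that a CA_X(N; t', k, w) exists. -/

import Mathlib

/-- A permutation `π` of `[v]` covers a sequence `s` of distinct elements if the
elements appear in order in `π`, i.e. `π⁻¹(s i) < π⁻¹(s j)` for `i < j`. -/
def SeqCovers {v t : ℕ} (π : Equiv.Perm (Fin v)) (s : Fin t → Fin v) : Prop :=
  ∀ i j : Fin t, i < j → π.symm (s i) < π.symm (s j)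

instance {v t : ℕ} (s : Fin t → Fin v) :
    DecidablePred fun π : Equiv.Perm (Fin v) => SeqCovers π s := fun π => by
  unfold SeqCovers; infer_instance

/-- `X` is a sequence covering array SCA(N; t, v): a set of `N` permutations of `[v]`
such that every sequence of `t` distinct elements of `[v]` is covered by at least one. -/
def IsSCA (N t v : ℕ) (X : Finset (Equiv.Perm (Fin v))) : Prop :=
  X.card = N ∧ ∀ s : Fin t → Fin v, Function.Injective s → ∃ π ∈ X, SeqCovers π s

/-- `μ(T)` for a `t`-way interaction with symbol vector `ν`: the product over symbols `σ`
of `|τ_σ(T)|!` where `τ_σ(T)` is the set of positions carrying symbol `σ`. -/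
def mu {w t : ℕ} (ν : Fin t → Fin w) : ℕ :=
  ∏ σ : Fin w, Nat.factorial (Finset.univ.filter fun i => ν i = σ).card

/-- The number of rows of `C` covering the interaction given by distinct columns `c i`
and symbols `ν i`. -/
def CoversCount {κ : Type} {w t : ℕ}
    (C : Multiset (κ → Fin w)) (c : Fin t → κ) (ν : Fin t → Fin w) : ℕ :=
  C.countP fun ρ => ∀ i, ρ (c i) = ν i

/-- `C` is an excess coverage array CA_X(N; t, k, v): an `N × k` array (multiset of rows)
over `[v]` in which every `t`-way interaction `T` is covered by at least `μ(T)` rows. -/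
def IsCAX (N t k v : ℕ) (C : Multiset (Fin k → Fin v)) : Prop :=
  Multiset.card C = N ∧
  ∀ c : Fin t → Fin k, Function.Injective c →
    ∀ ν : Fin t → Fin v, mu ν ≤ CoversCount C c ν

/-- `C` is a covering array CA(N; t, k, v): every `t`-way interaction is covered by at
least one row. -/
def IsCA (N t k v : ℕ) (C : Multiset (Fin k → Fin v)) : Prop :=
  Multiset.card C = N ∧
  ∀ c : Fin t → Fin k, Function.Injective c →
    ∀ ν : Fin t → Fin v, 1 ≤ CoversCount C c ν

/-- `CAN(t, k, v)`: the smallest `N` for which a CA(N; t, k, v) exists. -/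
noncomputable def CAN (t k v : ℕ) : ℕ :=
  sInf {N | ∃ C : Multiset (Fin k → Fin v), IsCA N t k v C}

/-- `CAN_X(t, k, v)`: the smallest `N` for which a CA_X(N; t, k, v) exists. -/
noncomputable def CANX (t k v : ℕ) : ℕ :=
  sInf {N | ∃ C : Multiset (Fin k → Fin v), IsCAX N t k v C}

/-- `SCAN(t, v)`: the smallest `N` for which an SCA(N; t, v) exists. -/
noncomputable def SCAN (t v : ℕ) : ℕ :=
  sInf {N | ∃ X : Finset (Equiv.Perm (Fin v)), IsSCA N t v X}


open Finset

/-- rank of `m` in the tuple `u`. -/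
def rkc {n v : ℕ} (u : Fin n → Fin v) (m : Fin n) : ℕ :=
  (Finset.univ.filter fun m' => u m' < u m).card

lemma rkc_lt {n v : ℕ} (u : Fin n → Fin v) (m : Fin n) : rkc u m < n := by
  have h1 : (Finset.univ.filter fun m' => u m' < u m) ⊆ Finset.univ.erase m := by
    intro x hx
    simp only [mem_filter, Finset.mem_univ, true_and] at hx
    exact Finset.mem_erase.2 ⟨fun h => by subst h; exact lt_irrefl _ hx, Finset.mem_univ x⟩
  have h2 := Finset.card_le_card h1
  have h3 : (Finset.univ.erase m).card = Fintype.card (Fin n) - 1 := by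
    rw [Finset.card_erase_of_mem (Finset.mem_univ m), Finset.card_univ]
  have hn : 0 < n := m.pos
  simp only [Fintype.card_fin] at h3
  unfold rkc
  omega

lemma rkc_injective {n v : ℕ} {u : Fin n → Fin v} (hu : Function.Injective u) :
    Function.Injective (rkc u) := by
  have key : ∀ x y : Fin n, u x < u y → rkc u x < rkc u y := by
    intro x y hlt
    have hss : (Finset.univ.filter fun z => u z < u x) ⊂
        (Finset.univ.filter fun z => u z < u y) := by
      constructor
      · intro z hz
        simp only [mem_filter, Finset.mem_univ, true_and] at hz ⊢
        exact hz.trans hlt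
      · intro hsub
        have := hsub (Finset.mem_filter.2 ⟨Finset.mem_univ x, hlt⟩)
        simp only [mem_filter, Finset.mem_univ, true_and] at this
        exact lt_irrefl _ this
    exact Finset.card_lt_card hss
  intro m m' h
  rcases lt_trichotomy (u m) (u m') with h1 | h1 | h1
  · exact absurd h (Nat.ne_of_lt (key _ _ h1))
  · exact hu h1
  · exact absurd h.symm (Nat.ne_of_lt (key _ _ h1))

lemma card_filter_val_lt {n N : ℕ} (h : N ≤ n) :
    (Finset.univ.filter fun r : Fin n => (r : ℕ) < N).card = N := by
  have he : (Finset.univ.filter fun r : Fin n => (r : ℕ) < N)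
      = (Finset.univ : Finset (Fin N)).map (Fin.castLEEmb h) := by
    ext x
    simp only [mem_filter, Finset.mem_univ, true_and, Finset.mem_map,
      Fin.castLEEmb, Function.Embedding.coeFn_mk, Fin.castLE]
    constructor
    · intro hx
      exact ⟨⟨(x : ℕ), hx⟩, by simp [Fin.ext_iff]⟩
    · rintro ⟨y, rfl⟩
      exact y.2
  rw [he, Finset.card_map, Finset.card_univ, Fintype.card_fin]

lemma card_filter_perm_lt {n N : ℕ} (σ : Equiv.Perm (Fin n)) (h : N ≤ n) :
    (Finset.univ.filter fun m : Fin n => ((σ m : ℕ) < N)).card = N := by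
  have hcard : (Finset.univ.filter fun m : Fin n => ((σ m : ℕ) < N)).card
      = (Finset.univ.filter fun r : Fin n => ((r : ℕ) < N)).card := by
    apply Finset.card_bij' (fun m _ => σ m) (fun r _ => σ.symm r) <;> simp
  rw [hcard, card_filter_val_lt h]

lemma perm_apply_eq_of_strictMono {α : Type*} [LinearOrder α] [Finite α]
    (e : Equiv.Perm α) (h : StrictMono ⇑e) : ∀ x, e x = x := by
  have hsymm : StrictMono ⇑e.symm := fun x y hxy => by
    rcases lt_trichotomy (e.symm x) (e.symm y) with h1 | h1 | h1
    · exact h1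
    · exact absurd (by rw [← e.apply_symm_apply x, ← e.apply_symm_apply y, h1]) (ne_of_lt hxy)
    · have := h h1
      simp only [Equiv.apply_symm_apply] at this
      exact absurd this (not_lt.2 hxy.le)
  intro x
  refine le_antisymm ?_ h.le_apply
  have h2 := hsymm.le_apply (x := e x)
  simpa using h2

lemma perm_eq_of_lt_iff {α : Type*} [LinearOrder α] [Finite α]
    (u u' : Equiv.Perm α) (h : ∀ x y, u x < u y ↔ u' x < u' y) : u = u' := by
  have hsm : StrictMono ⇑(u.symm.trans u') := by
    intro x y hxy
    have := (h (u.symm x) (u.symm y)).1 (by simpa using hxy)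
    simpa [Equiv.trans_apply] using this
  have := perm_apply_eq_of_strictMono _ hsm
  ext z
  have h2 := this (u z)
  simp only [Equiv.trans_apply, Equiv.symm_apply_apply] at h2
  exact h2.symm

open Finset

lemma exists_covering_perm {v t : ℕ} (htv : t ≤ v) (s : Fin t → Fin v)
    (hs : Function.Injective s) : ∃ π : Equiv.Perm (Fin v), SeqCovers π s := by
  classical
  set f : Fin t → Fin v := Fin.castLE htv with hf_def
  have hf : Function.Injective f := Fin.castLE_injective htv
  have hcard : Fintype.card ((Set.range f)ᶜ : Set (Fin v))
      = Fintype.card ((Set.range s)ᶜ : Set (Fin v)) := by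
    rw [Fintype.card_compl_set, Fintype.card_compl_set,
      Set.card_range_of_injective hf, Set.card_range_of_injective hs]
  let π : Equiv.Perm (Fin v) :=
    ((Equiv.Set.sumCompl (Set.range f)).symm.trans
      (((Equiv.ofInjective f hf).symm.trans (Equiv.ofInjective s hs)).sumCongr
        (Fintype.equivOfCardEq hcard))).trans (Equiv.Set.sumCompl (Set.range s))
  have hπ : ∀ i, π (f i) = s i := by
    intro i
    have h1 : (Equiv.Set.sumCompl (Set.range f)).symm (f i)
        = Sum.inl ⟨f i, Set.mem_range_self i⟩ :=
      Equiv.Set.sumCompl_symm_apply_of_mem (Set.mem_range_self i)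
    simp only [π, Equiv.trans_apply, h1, Equiv.sumCongr_apply, Sum.map_inl]
    have h2 : (Equiv.ofInjective f hf).symm ⟨f i, Set.mem_range_self i⟩ = i := by
      apply hf
      have := Equiv.apply_ofInjective_symm hf ⟨f i, Set.mem_range_self i⟩
      simpa using this
    rw [h2]
    simp only [Equiv.Set.sumCompl_apply_inl, Equiv.ofInjective_apply]
  refine ⟨π, ?_⟩
  intro i j hij
  have hi : π.symm (s i) = f i := by rw [← hπ i, Equiv.symm_apply_apply]
  have hj : π.symm (s j) = f j := by rw [← hπ j, Equiv.symm_apply_apply]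
  rw [hi, hj]
  simp only [hf_def, Fin.lt_def, Fin.coe_castLE]
  exact hij

lemma scan_set_nonempty {v t : ℕ} (htv : t ≤ v) :
    ∃ N, ∃ X : Finset (Equiv.Perm (Fin v)), IsSCA N t v X := by
  refine ⟨(Finset.univ : Finset (Equiv.Perm (Fin v))).card, Finset.univ, rfl, ?_⟩
  intro s hs
  obtain ⟨π, hπ⟩ := exists_covering_perm htv s hs
  exact ⟨π, Finset.mem_univ π, hπ⟩

def specEl {v a : ℕ} (ha : a ≤ v) (m : Fin a) : Fin v :=
  ⟨v - a + (m : ℕ), by have := m.2; omega⟩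

def colEl {v a : ℕ} (C : Fin (v - a)) : Fin v :=
  ⟨(C : ℕ), by have := C.2; omega⟩

def keyF {v a : ℕ} (ha : a ≤ v) (π : Equiv.Perm (Fin v)) : Fin a → ℕ :=
  rkc (fun m => π.symm (specEl ha m))

def rowF {v a : ℕ} (ha : a ≤ v) (π : Equiv.Perm (Fin v)) (C : Fin (v - a)) : Fin (a + 1) :=
  ⟨(Finset.univ.filter fun m : Fin a => π.symm (specEl ha m) < π.symm (colEl C)).card, by
    have h1 := Finset.card_filter_le (Finset.univ : Finset (Fin a))
      (fun m : Fin a => π.symm (specEl ha m) < π.symm (colEl C))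
    have h2 : (Finset.univ : Finset (Fin a)).card = a := by simp
    omega⟩

lemma fiber_isCAX {v t a : ℕ} (ha : a ≤ v) (ha0 : 0 < a) (hat : a < t) (htv : t ≤ v)
    {X : Finset (Equiv.Perm (Fin v))} {N : ℕ} (hX : IsSCA N t v X)
    (σ : Equiv.Perm (Fin a)) :
    IsCAX (X.filter fun π => keyF ha π = fun m => ((σ m : ℕ))).card (t - a) (v - a) (a + 1)
      ((X.filter fun π => keyF ha π = fun m => ((σ m : ℕ))).val.map (rowF ha)) := by
  classical
  set t' := t - a with ht'
  constructor
  · rw [Multiset.card_map]; rfl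
  intro c hc ν
  set Xf := X.filter fun π => keyF ha π = fun m => ((σ m : ℕ)) with hXf
  have hCC : CoversCount (Xf.val.map (rowF ha)) c ν
      = (Xf.filter fun π => ∀ i, rowF ha π (c i) = ν i).card := by
    rw [CoversCount, Multiset.countP_map]
    rfl
  rw [hCC]
  have hta : t' + a = t := by omega
  let q : (Fin t' ⊕ Fin a) ≃ Fin t := finSumFinEquiv.trans (finCongr hta)
  let g' : Fin t' ⊕ Fin a → Fin v := Sum.elim (fun j => colEl (c j)) (specEl ha)
  have hg' : Function.Injective g' := by
    rintro (j | m) (j' | m') h <;>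
      simp only [g', Sum.elim_inl, Sum.elim_inr, colEl, specEl, Fin.mk.injEq] at h
    · exact congrArg Sum.inl (hc (Fin.val_injective h))
    · exfalso; have := (c j).2; omega
    · exfalso; have := (c j').2; omega
    · have hm : (m : ℕ) = (m' : ℕ) := by omega
      exact congrArg Sum.inr (Fin.val_injective hm)
  let O := ∀ b : Fin (a + 1), Equiv.Perm {j : Fin t' // ν j = b}
  have hmu : mu ν = Fintype.card O := by
    rw [Fintype.card_pi]
    unfold mu
    refine Finset.prod_congr rfl fun b _ => ?_
    rw [Fintype.card_perm, Fintype.card_subtype]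
  let K : O → Fin t' ⊕ Fin a → ℕ ×ₗ ℕ := fun o => Sum.elim
    (fun j => toLex (2 * (ν j : ℕ), (((o (ν j)).symm ⟨j, rfl⟩).1 : ℕ)))
    (fun m => toLex (2 * (σ m : ℕ) + 1, 0))
  have idx_cast : ∀ (o : O) (j : Fin t') (b : Fin (a + 1)) (h : ν j = b),
      (((o (ν j)).symm ⟨j, rfl⟩).1 : ℕ) = (((o b).symm ⟨j, h⟩).1 : ℕ) := by
    intro o j b h
    subst h
    rfl
  have hK : ∀ o : O, Function.Injective (K o) := by
    intro o
    rintro (j | m) (j' | m') h <;>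
      simp only [K, Sum.elim_inl, Sum.elim_inr, toLex_inj, Prod.mk.injEq] at h
    · have hν : ν j = ν j' := Fin.val_injective (by omega)
      rw [idx_cast o j (ν j') hν, idx_cast o j' (ν j') rfl] at h
      have hsub : (o (ν j')).symm ⟨j, hν⟩ = (o (ν j')).symm ⟨j', rfl⟩ :=
        Subtype.ext (Fin.val_injective h.2)
      have := (o (ν j')).symm.injective hsub
      exact congrArg Sum.inl (congrArg Subtype.val this)
    · exfalso; omega
    · exfalso; omega
    · have hm : σ m = σ m' := Fin.val_injective (by omega)
      exact congrArg Sum.inr (σ.injective hm)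
  let f : O → Fin t → ℕ ×ₗ ℕ := fun o i => K o (q.symm i)
  let e : O → Equiv.Perm (Fin t) := fun o => Tuple.sort (f o)
  let seq : O → Fin t → Fin v := fun o i => g' (q.symm (e o i))
  have hseq_inj : ∀ o, Function.Injective (seq o) := fun o =>
    hg'.comp (q.symm.injective.comp (e o).injective)
  have hF : ∀ o, StrictMono (fun i => K o (q.symm (e o i))) := by
    intro o
    have hmono : Monotone (f o ∘ ⇑(e o)) := Tuple.monotone_sort (f o)
    have hinj : Function.Injective (f o ∘ ⇑(e o)) :=
      ((hK o).comp q.symm.injective).comp (e o).injective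
    exact hmono.strictMono_of_injective hinj
  have master : ∀ (o : O) (π : Equiv.Perm (Fin v)), SeqCovers π (seq o) →
      ∀ x y, (π.symm (g' x) < π.symm (g' y) ↔ K o x < K o y) := by
    intro o π hcov x y
    have hH : StrictMono (fun i => π.symm (seq o i)) := fun i j hij => hcov i j hij
    have hx : q.symm (e o ((e o).symm (q x))) = x := by simp
    have hy : q.symm (e o ((e o).symm (q y))) = y := by simp
    have h1 : π.symm (g' x) < π.symm (g' y)
        ↔ ((e o).symm (q x)) < ((e o).symm (q y)) := by
      conv_lhs => rw [← hx, ← hy]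
      exact hH.lt_iff_lt
    have h2 : K o x < K o y
        ↔ ((e o).symm (q x)) < ((e o).symm (q y)) := by
      conv_lhs => rw [← hx, ← hy]
      exact (hF o).lt_iff_lt
    rw [h1, h2]
  have hkey : ∀ (o : O) (π : Equiv.Perm (Fin v)), SeqCovers π (seq o) →
      keyF ha π = fun m => ((σ m : ℕ)) := by
    intro o π hcov
    funext m
    have hiff : ∀ m' : Fin a, (π.symm (specEl ha m') < π.symm (specEl ha m))
        ↔ ((σ m' : ℕ) < (σ m : ℕ)) := by
      intro m'
      have hm := master o π hcov (Sum.inr m') (Sum.inr m)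
      simp only [g', Sum.elim_inr, K] at hm
      rw [hm, Prod.Lex.lt_iff]
      simp only [ofLex_toLex]
      constructor
      · rintro (h | ⟨h1, h2⟩)
        · omega
        · exact absurd h2 (lt_irrefl 0)
      · intro h; left; omega
    show rkc (fun m' => π.symm (specEl ha m')) m = (σ m : ℕ)
    unfold rkc
    have hfe : (Finset.univ.filter fun m' => π.symm (specEl ha m') < π.symm (specEl ha m))
        = Finset.univ.filter fun m' : Fin a => ((σ m' : ℕ) < (σ m : ℕ)) := by
      ext x
      simp [hiff x]
    rw [hfe, card_filter_perm_lt σ (by have := (σ m).2; omega)]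
  have hrow : ∀ (o : O) (π : Equiv.Perm (Fin v)), SeqCovers π (seq o) →
      ∀ i, rowF ha π (c i) = ν i := by
    intro o π hcov i
    have hiff : ∀ m : Fin a, (π.symm (specEl ha m) < π.symm (colEl (c i)))
        ↔ ((σ m : ℕ) < (ν i : ℕ)) := by
      intro m
      have hm := master o π hcov (Sum.inr m) (Sum.inl i)
      simp only [g', Sum.elim_inr, Sum.elim_inl, K] at hm
      rw [hm, Prod.Lex.lt_iff]
      simp only [ofLex_toLex]
      constructor
      · rintro (h | ⟨h1, h2⟩) <;> omega
      · intro h; left; omega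
    apply Fin.ext
    show (Finset.univ.filter fun m : Fin a => π.symm (specEl ha m) < π.symm (colEl (c i))).card
        = (ν i : ℕ)
    have hfe : (Finset.univ.filter fun m : Fin a => π.symm (specEl ha m) < π.symm (colEl (c i)))
        = Finset.univ.filter fun m : Fin a => ((σ m : ℕ) < (ν i : ℕ)) := by
      ext x
      simp [hiff x]
    rw [hfe, card_filter_perm_lt σ (by have := (ν i).2; omega)]
  let P : O → Equiv.Perm (Fin v) := fun o => (hX.2 (seq o) (hseq_inj o)).choose
  have hP : ∀ o, P o ∈ X ∧ SeqCovers (P o) (seq o) := fun o =>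
    (hX.2 (seq o) (hseq_inj o)).choose_spec
  have hPinj : Function.Injective P := by
    intro o o' hPeq
    have hcov : SeqCovers (P o') (seq o) := by rw [← hPeq]; exact (hP o).2
    have hcov' : SeqCovers (P o') (seq o') := (hP o').2
    have hcomp : ∀ x y, K o x < K o y ↔ K o' x < K o' y := by
      intro x y
      rw [← master o (P o') hcov x y, master o' (P o') hcov' x y]
    funext b
    have hsymm_eq : (o b).symm = (o' b).symm := by
      apply perm_eq_of_lt_iff
      rintro ⟨j, hj⟩ ⟨j', hj'⟩
      have h1 := hcomp (Sum.inl j) (Sum.inl j')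
      simp only [K, Sum.elim_inl, Prod.Lex.lt_iff, ofLex_toLex] at h1
      rw [idx_cast o j b hj, idx_cast o j' b hj', idx_cast o' j b hj,
        idx_cast o' j' b hj'] at h1
      have hbb : (ν j : ℕ) = (ν j' : ℕ) := by rw [hj, hj']
      simp only [← Subtype.coe_lt_coe, Fin.lt_def]
      constructor
      · intro hlt
        rcases h1.mp (Or.inr ⟨by omega, hlt⟩) with h | ⟨-, h⟩
        · omega
        · exact h
      · intro hlt
        rcases h1.mpr (Or.inr ⟨by omega, hlt⟩) with h | ⟨-, h⟩
        · omega
        · exact h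
    have h2 := congrArg Equiv.symm hsymm_eq
    simpa using h2
  calc mu ν = Fintype.card O := hmu
    _ = (Finset.univ : Finset O).card := Finset.card_univ.symm
    _ ≤ (Xf.filter fun π => ∀ i, rowF ha π (c i) = ν i).card := by
        apply Finset.card_le_card_of_injOn P
        · intro o _
          simp only [Finset.mem_coe, Finset.mem_filter, hXf]
          exact ⟨⟨(hP o).1, hkey o (P o) (hP o).2⟩, hrow o (P o) (hP o).2⟩
        · intro o _ o' _ h
          exact hPinj h

/-- For `v ≥ t ≥ 3` and `0 < a < t`,
`SCAN(t, v) ≥ a! · CAN_X(t − a, v − a, a + 1)`. -/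
theorem scan_ge_factorial_mul_canx (v t a : ℕ) (ht : 3 ≤ t) (htv : t ≤ v)
    (ha0 : 0 < a) (hat : a < t) :
    Nat.factorial a * CANX (t - a) (v - a) (a + 1) ≤ SCAN t v := by
  classical
  have ha : a ≤ v := by omega
  have hne : {N | ∃ X : Finset (Equiv.Perm (Fin v)), IsSCA N t v X}.Nonempty := by
    obtain ⟨N₀, X₀, h₀⟩ := scan_set_nonempty (t := t) htv
    exact ⟨N₀, X₀, h₀⟩
  have hmem := Nat.sInf_mem hne
  obtain ⟨X, hX⟩ := hmem
  set S : Finset (Fin a → ℕ) :=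
    Finset.univ.image (fun p : Equiv.Perm (Fin a) => fun m => ((p m : ℕ))) with hS
  have hkey_mem : ∀ π : Equiv.Perm (Fin v), keyF ha π ∈ S := by
    intro π
    have hlt : ∀ m, keyF ha π m < a := fun m => rkc_lt _ m
    have hinj : Function.Injective (keyF ha π) := by
      apply rkc_injective
      intro x y h
      have hs : specEl ha x = specEl ha y := π.symm.injective h
      simp only [specEl, Fin.mk.injEq] at hs
      exact Fin.val_injective (by omega)
    let u : Fin a → Fin a := fun m => ⟨keyF ha π m, hlt m⟩
    have hu : Function.Injective u := fun x y h => hinj (by simpa [u, Fin.ext_iff] using h)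
    have hbij := Finite.injective_iff_bijective.1 hu
    refine Finset.mem_image.2 ⟨Equiv.ofBijective u hbij, Finset.mem_univ _, ?_⟩
    funext m
    simp [Equiv.ofBijective, u]
  have hcoe_inj : Function.Injective (fun p : Equiv.Perm (Fin a) => fun m => ((p m : ℕ))) := by
    intro p p' h
    ext m
    exact congrFun h m
  have hcardS : S.card = Nat.factorial a := by
    rw [hS, Finset.card_image_of_injective _ hcoe_inj, Finset.card_univ, Fintype.card_perm,
      Fintype.card_fin]
  have hsum : X.card = ∑ σf ∈ S, (X.filter fun π => keyF ha π = σf).card :=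
    Finset.card_eq_sum_card_fiberwise fun π _ => hkey_mem π
  have hterm : ∀ σf ∈ S, CANX (t - a) (v - a) (a + 1) ≤ (X.filter fun π => keyF ha π = σf).card := by
    intro σf hσf
    obtain ⟨p, -, rfl⟩ := Finset.mem_image.1 hσf
    exact Nat.sInf_le ⟨_, fiber_isCAX ha ha0 hat htv hX p⟩
  calc Nat.factorial a * CANX (t - a) (v - a) (a + 1)
      = ∑ _σf ∈ S, CANX (t - a) (v - a) (a + 1) := by
        rw [Finset.sum_const, hcardS, smul_eq_mul]
    _ ≤ ∑ σf ∈ S, (X.filter fun π => keyF ha π = σf).card := Finset.sum_le_sum hterm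
    _ = X.card := hsum.symm
    _ = SCAN t v := hX.1
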